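/- (Lemma 2, part 4.) Nonzero density-evolution fixed points at distinct positive channel parameters are distinct: if 0 < ε₁ ≤ 1, 0 < ε₂ ≤ 1, ε₁ ≠ ε₂, x₁ ∈ X_{ε₁} \ {0} satisfies x₁ = f(g(x₁); ε₁), and x₂ ∈ X_{ε₂} \ {0} satisfies x₂ = f(g(x₂); ε₂), then x₁ ≠ x₂. -/

import Mathlib

open scoped BigOperators

noncomputable section

/-- Number of `j`-dimensional subspaces `U` of `𝔽₂^m` whose intersection with `W`
has dimension `k`. -/
def numInter (m j k : ℕ) (W : Submodule (ZMod 2) (Fin m → ZMod 2)) : ℕ :=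
  Set.ncard {U : Submodule (ZMod 2) (Fin m → ZMod 2) |
    Module.finrank (ZMod 2) U = j ∧ Module.finrank (ZMod 2) ↥(U ⊓ W) = k}

/-- Number of `j`-dimensional subspaces `U` of `𝔽₂^m` whose sum with `W`
has dimension `k`. -/
def numSum (m j k : ℕ) (W : Submodule (ZMod 2) (Fin m → ZMod 2)) : ℕ :=
  Set.ncard {U : Submodule (ZMod 2) (Fin m → ZMod 2) |
    Module.finrank (ZMod 2) U = j ∧ Module.finrank (ZMod 2) ↥(U ⊔ W) = k}

/-- Number of `j`-dimensional subspaces of `𝔽₂^m`. -/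
def numDim (m j : ℕ) : ℕ :=
  Set.ncard {U : Submodule (ZMod 2) (Fin m → ZMod 2) | Module.finrank (ZMod 2) U = j}

/-- A canonical `i`-dimensional subspace of `𝔽₂^m` (for `i ≤ m`): vectors supported on
the first `i` coordinates. -/
def stdW (m i : ℕ) : Submodule (ZMod 2) (Fin m → ZMod 2) :=
  Submodule.span (ZMod 2) {x | ∀ t : Fin m, i ≤ (t : ℕ) → x t = 0}

/-- `V^m_{i,j,k}`: probability that a uniformly random `j`-dimensional subspace `U`
of `𝔽₂^m` satisfies `dim (U ⊓ W) = k`, for a fixed `i`-dimensional subspace `W`. -/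
def Vprob (m i j k : ℕ) : ℝ := (numInter m j k (stdW m i) : ℝ) / (numDim m j : ℝ)

/-- `C^m_{i,j,k}`: probability that a uniformly random `j`-dimensional subspace `U`
of `𝔽₂^m` satisfies `dim (U ⊔ W) = k`, for a fixed `i`-dimensional subspace `W`. -/
def Cprob (m i j k : ℕ) : ℝ := (numSum m j k (stdW m i) : ℝ) / (numDim m j : ℝ)

/-- The operation `⊡`. -/
def boxdot (m : ℕ) (a b : Fin (m+1) → ℝ) : Fin (m+1) → ℝ :=
  fun k => ∑ i : Fin (m+1), ∑ j : Fin (m+1), Vprob m i j k * a i * b j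

/-- The operation `⊠`. -/
def boxtimes (m : ℕ) (a b : Fin (m+1) → ℝ) : Fin (m+1) → ℝ :=
  fun k => ∑ i : Fin (m+1), ∑ j : Fin (m+1), Cprob m i j k * a i * b j

/-- `boxdotPow m n a = ⊡^{n+1} a` (the `(n+1)`-fold `⊡`-product of `a` with itself). -/
def boxdotPow (m : ℕ) : ℕ → (Fin (m+1) → ℝ) → (Fin (m+1) → ℝ)
  | 0, a => a
  | n+1, a => boxdot m a (boxdotPow m n a)

/-- `boxtimesPow m n a = ⊠^{n+1} a` (the `(n+1)`-fold `⊠`-product of `a` with itself). -/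
def boxtimesPow (m : ℕ) : ℕ → (Fin (m+1) → ℝ) → (Fin (m+1) → ℝ)
  | 0, a => a
  | n+1, a => boxtimes m a (boxtimesPow m n a)

/-- `p∘(ε)`. -/
def pcirc (m : ℕ) (ε : ℝ) : Fin (m+1) → ℝ :=
  fun i => (m.choose i : ℝ) * ε ^ (i : ℕ) * (1 - ε) ^ (m - (i : ℕ))

/-- `f∘(y∘; ε) = p∘(ε) ⊡ (⊡^{d_v − 1} y∘)`. -/
def fcirc (m dv : ℕ) (ε : ℝ) (y : Fin (m+1) → ℝ) : Fin (m+1) → ℝ :=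
  boxdot m (pcirc m ε) (boxdotPow m (dv - 2) y)

/-- `g∘(x∘) = ⊠^{d_c − 1} x∘`. -/
def gcirc (m dc : ℕ) (x : Fin (m+1) → ℝ) : Fin (m+1) → ℝ :=
  boxtimesPow m (dc - 2) x

/-- Extension of `x ∈ ℝ^m` (indexed `1,…,m`) to `ℕ` with conventions `x_0 = 1`,
`x_i = 0` for `i > m`. -/
def extSeq (m : ℕ) (x : Fin m → ℝ) : ℕ → ℝ :=
  fun i => if _h0 : i = 0 then 1 else if h : i ≤ m then x ⟨i - 1, by omega⟩ else 0

/-- `x̃ ∈ ℝ^{m+1}` with `x̃_i = x_i − x_{i+1}`. -/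
def tilde (m : ℕ) (x : Fin m → ℝ) : Fin (m+1) → ℝ :=
  fun i => extSeq m x i - extSeq m x ((i : ℕ) + 1)

/-- `f(y; ε)_i = Σ_{k=i}^m f∘(ỹ; ε)_k` (here `i : Fin m` denotes the index `i+1 ∈ {1,…,m}`). -/
def fFun (m dv : ℕ) (ε : ℝ) (y : Fin m → ℝ) : Fin m → ℝ :=
  fun i => ∑ k : Fin (m+1), if (i : ℕ) + 1 ≤ (k : ℕ) then fcirc m dv ε (tilde m y) k else 0

/-- `g(x)_i = Σ_{k=i}^m g∘(x̃)_k`. -/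
def gFun (m dc : ℕ) (x : Fin m → ℝ) : Fin m → ℝ :=
  fun i => ∑ k : Fin (m+1), if (i : ℕ) + 1 ≤ (k : ℕ) then gcirc m dc (tilde m x) k else 0

/-- `p(ε)_i = Σ_{k=i}^m p∘_k(ε)`. -/
def pFun (m : ℕ) (ε : ℝ) : Fin m → ℝ :=
  fun i => ∑ k : Fin (m+1), if (i : ℕ) + 1 ≤ (k : ℕ) then pcirc m ε k else 0

/-- `X_ε = {x ∈ ℝ^m : 0 ≤ x_i ≤ p(ε)_i}`. -/
def Xset (m : ℕ) (ε : ℝ) : Set (Fin m → ℝ) := {x | ∀ i, 0 ≤ x i ∧ x i ≤ pFun m ε i}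

/-- `Y = [0,1]^m`. -/
def Yset (m : ℕ) : Set (Fin m → ℝ) := {y | ∀ i, 0 ≤ y i ∧ y i ≤ 1}

/-- The continuous linear map `v ↦ Σ_s c_s v_s`, i.e. the row vector `c` viewed as a
linear functional; used to express gradients. -/
def rowDeriv (m : ℕ) (c : Fin m → ℝ) : (Fin m → ℝ) →L[ℝ] ℝ :=
  ∑ s : Fin m, c s • (ContinuousLinearMap.proj s : (Fin m → ℝ) →L[ℝ] ℝ)

/-- The potential function `U(x; ε) = g(x) D xᵀ − G(x) − F(g(x); ε)` (with `ε` fixed,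
absorbed into `F`). -/
def Upot (m dc : ℕ) (D : Matrix (Fin m) (Fin m) ℝ) (F G : (Fin m → ℝ) → ℝ)
    (x : Fin m → ℝ) : ℝ :=
  (∑ a : Fin m, ∑ b : Fin m, gFun m dc x a * D a b * x b) - G x - F (gFun m dc x)

section AuxProof
open Finset Module

variable {m : ℕ}

instance : Finite (Submodule (ZMod 2) (Fin m → ZMod 2)) :=
  Finite.of_injective (fun U => (U : Set (Fin m → ZMod 2))) SetLike.coe_injective

lemma stdW_eq_span (i : ℕ) :
    stdW m i = Submodule.span (ZMod 2)
      (Set.range fun t : {t : Fin m // (t : ℕ) < i} => (Pi.single (t : Fin m) (1 : ZMod 2) : Fin m → ZMod 2)) := by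
  classical
  apply le_antisymm
  · rw [stdW, Submodule.span_le]
    intro x hx
    have hxsum : x = ∑ t : Fin m, Pi.single t (x t) := (Finset.univ_sum_single x).symm
    rw [hxsum]
    apply Submodule.sum_mem
    intro t _
    by_cases ht : (t : ℕ) < i
    · have : (Pi.single t (x t) : Fin m → ZMod 2) = x t • Pi.single t (1 : ZMod 2) := by
        funext s
        by_cases hs : s = t
        · subst hs; simp
        · simp [Pi.single_eq_of_ne hs]
      rw [this]
      exact Submodule.smul_mem _ _ (Submodule.subset_span ⟨⟨t, ht⟩, rfl⟩)
    · have : x t = 0 := hx t (not_lt.mp ht)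
      rw [this]
      simp
  · rw [stdW]
    apply Submodule.span_mono
    rintro _ ⟨⟨t, ht⟩, rfl⟩
    intro s hs
    exact Pi.single_eq_of_ne (by rintro rfl; omega) 1

lemma finrank_stdW (i : ℕ) (hi : i ≤ m) : Module.finrank (ZMod 2) (stdW m i) = i := by
  classical
  rw [stdW_eq_span]
  have hli : LinearIndependent (ZMod 2)
      (fun t : {t : Fin m // (t : ℕ) < i} => (Pi.single (t : Fin m) (1 : ZMod 2) : Fin m → ZMod 2)) := by
    have h0 : (fun t : {t : Fin m // (t : ℕ) < i} => (Pi.single (t : Fin m) (1 : ZMod 2) : Fin m → ZMod 2))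
        = (Pi.basisFun (ZMod 2) (Fin m)) ∘ (fun t : {t : Fin m // (t : ℕ) < i} => (t : Fin m)) := by
      funext t; simp [Pi.basisFun_apply]
    rw [h0]
    exact (Pi.basisFun (ZMod 2) (Fin m)).linearIndependent.comp _ Subtype.val_injective
  rw [finrank_span_eq_card hli]
  have : {t : Fin m // (t : ℕ) < i} ≃ Fin i :=
    { toFun := fun t => ⟨t, t.2⟩
      invFun := fun s => ⟨⟨s, lt_of_lt_of_le s.2 hi⟩, s.2⟩
      left_inv := fun t => by ext; rfl
      right_inv := fun s => by ext; rfl }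
  rw [Fintype.card_congr this, Fintype.card_fin]

open scoped Classical

lemma exists_equiv_map_ne_zero' (v w : Fin m → ZMod 2) (hv : v ≠ 0) (hw : w ≠ 0) :
    ∃ e : (Fin m → ZMod 2) ≃ₗ[ZMod 2] (Fin m → ZMod 2), e v = w := by
  classical
  have hsv := (linearIndepOn_singleton_iff (R := ZMod 2) (v := id)).mpr hv
  have hsw := (linearIndepOn_singleton_iff (R := ZMod 2) (v := id)).mpr hw
  let Bv := Basis.extend hsv
  let Bw := Basis.extend hsw
  have hvmem : v ∈ hsv.extend (Set.subset_univ _) := hsv.subset_extend _ rfl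
  have hwmem : w ∈ hsw.extend (Set.subset_univ _) := hsw.subset_extend _ rfl
  let iv : hsv.extend (Set.subset_univ _) := ⟨v, hvmem⟩
  let jw : hsw.extend (Set.subset_univ _) := ⟨w, hwmem⟩
  let φ := Basis.indexEquiv Bv Bw
  let ψ := φ.trans (Equiv.swap (φ iv) jw)
  refine ⟨Bv.equiv Bw ψ, ?_⟩
  have h1 : Bv iv = v := Basis.extend_apply_self hsv iv
  have h2 : Bw jw = w := Basis.extend_apply_self hsw jw
  calc (Bv.equiv Bw ψ) v = (Bv.equiv Bw ψ) (Bv iv) := by rw [h1]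
    _ = Bw (ψ iv) := Basis.equiv_apply _ _ _ _
    _ = w := by simp [ψ, Equiv.swap_apply_left, h2]

lemma card_mem_filter (U : Submodule (ZMod 2) (Fin m → ZMod 2)) :
    (univ.filter (fun v => v ∈ U)).card = 2 ^ (Module.finrank (ZMod 2) U) := by
  rw [← Fintype.card_subtype]
  have h := card_eq_pow_finrank (K := ZMod 2) (V := U)
  simpa [ZMod.card] using h

lemma card_nonzero_mem (U : Submodule (ZMod 2) (Fin m → ZMod 2)) :
    (univ.filter (fun v => v ∈ U ∧ v ≠ 0)).card = 2 ^ (Module.finrank (ZMod 2) U) - 1 := by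
  have hins : univ.filter (fun v => v ∈ U) =
      insert 0 (univ.filter (fun v => v ∈ U ∧ v ≠ 0)) := by
    ext v
    simp only [Finset.mem_filter, Finset.mem_univ, true_and, Finset.mem_insert]
    constructor
    · intro hv; by_cases h0 : v = 0
      · exact Or.inl h0
      · exact Or.inr ⟨hv, h0⟩
    · rintro (rfl | ⟨hv, _⟩); · exact U.zero_mem
      · exact hv
  have h0 : (0 : Fin m → ZMod 2) ∉ univ.filter (fun v => v ∈ U ∧ v ≠ 0) := by simp
  have := card_mem_filter U
  rw [hins, Finset.card_insert_of_notMem h0] at this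
  omega

/-- number of `j`-dim subspaces containing a fixed nonzero vector doesn't depend on it -/
lemma count_contain_eq (j : ℕ) (v w : Fin m → ZMod 2) (hv : v ≠ 0) (hw : w ≠ 0) :
    ((univ.filter (fun U : Submodule (ZMod 2) (Fin m → ZMod 2) =>
        Module.finrank (ZMod 2) U = j)).filter (fun U => v ∈ U)).card =
    ((univ.filter (fun U : Submodule (ZMod 2) (Fin m → ZMod 2) =>
        Module.finrank (ZMod 2) U = j)).filter (fun U => w ∈ U)).card := by
  obtain ⟨e, he⟩ := exists_equiv_map_ne_zero' v w hv hw
  have cancel1 : ∀ U : Submodule (ZMod 2) (Fin m → ZMod 2),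
      Submodule.map e.symm.toLinearMap (Submodule.map e.toLinearMap U) = U := by
    intro U; ext x
    simp [Submodule.mem_map_equiv]
  have cancel2 : ∀ U : Submodule (ZMod 2) (Fin m → ZMod 2),
      Submodule.map e.toLinearMap (Submodule.map e.symm.toLinearMap U) = U := by
    intro U; ext x
    simp [Submodule.mem_map_equiv]
  refine Finset.card_nbij' (fun U => Submodule.map e.toLinearMap U)
    (fun U => Submodule.map e.symm.toLinearMap U) ?_ ?_ ?_ ?_
  · intro U hU
    simp only [Finset.mem_coe, Finset.mem_filter, Finset.mem_univ, true_and] at hU ⊢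
    exact ⟨by rw [LinearEquiv.finrank_map_eq]; exact hU.1,
      by rw [← he]; exact Submodule.mem_map_of_mem hU.2⟩
  · intro U' hU'
    simp only [Finset.mem_coe, Finset.mem_filter, Finset.mem_univ, true_and] at hU' ⊢
    refine ⟨by rw [LinearEquiv.finrank_map_eq]; exact hU'.1, ?_⟩
    have hv' : v = e.symm w := by rw [← he]; simp
    rw [hv']; exact Submodule.mem_map_of_mem hU'.2
  · intro U _; exact cancel1 U
  · intro U _; exact cancel2 U

lemma ncard_setOf_eq_filter {α : Type*} [Fintype α] (p : α → Prop) [DecidablePred p] :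
    Set.ncard {x | p x} = (univ.filter p).card := by
  rw [← Set.ncard_coe_finset]
  congr 1
  ext x; simp

lemma key_count (i j : ℕ) (hm : 1 ≤ m) (hj : j ≤ m)
    (W : Submodule (ZMod 2) (Fin m → ZMod 2)) (hW : Module.finrank (ZMod 2) W = i) :
    (2 ^ m - 1) * ∑ k ∈ Finset.range (m+1), numInter m j k W * (2 ^ k - 1)
      = numDim m j * ((2 ^ i - 1) * (2 ^ j - 1)) := by
  classical
  set Aj := univ.filter (fun U : Submodule (ZMod 2) (Fin m → ZMod 2) =>
    Module.finrank (ZMod 2) U = j) with hAj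
  have hfrk_total : Module.finrank (ZMod 2) (Fin m → ZMod 2) = m := Module.finrank_fin_fun (ZMod 2)
  have hnumDim : numDim m j = Aj.card := ncard_setOf_eq_filter _
  have hnumInter : ∀ k, numInter m j k W
      = (Aj.filter (fun U => Module.finrank (ZMod 2) ↥(U ⊓ W) = k)).card := by
    intro k
    rw [numInter, ncard_setOf_eq_filter, hAj, Finset.filter_filter]
  -- step 1 : fiberwise
  have step1 : ∑ k ∈ Finset.range (m+1), numInter m j k W * (2 ^ k - 1)
      = ∑ U ∈ Aj, (2 ^ (Module.finrank (ZMod 2) ↥(U ⊓ W)) - 1) := by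
    rw [← Finset.sum_fiberwise_of_maps_to'
      (g := fun U : Submodule (ZMod 2) (Fin m → ZMod 2) => Module.finrank (ZMod 2) ↥(U ⊓ W))
      (t := Finset.range (m+1)) (f := fun k => 2 ^ k - 1)
      (fun U _ => by
        simp only [Finset.mem_range]
        have := Submodule.finrank_le (R := ZMod 2) (U ⊓ W)
        omega)]
    apply Finset.sum_congr rfl
    intro k _
    rw [hnumInter k, Finset.sum_const, smul_eq_mul]
  -- step 2 : point counting per U
  have step2 : ∀ U : Submodule (ZMod 2) (Fin m → ZMod 2),
      2 ^ (Module.finrank (ZMod 2) ↥(U ⊓ W)) - 1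
        = (univ.filter (fun v => (v ∈ W ∧ v ≠ 0) ∧ v ∈ U)).card := by
    intro U
    rw [← card_nonzero_mem (U ⊓ W)]
    congr 1
    apply Finset.filter_congr
    intro v _
    simp only [Submodule.mem_inf]
    tauto
  -- swap lemma (generic in the ambient space condition)
  have swap : ∀ P : (Fin m → ZMod 2) → Prop,
      ∑ U ∈ Aj, (univ.filter (fun v => P v ∧ v ∈ U)).card
        = ∑ v ∈ univ.filter P, (Aj.filter (fun U => v ∈ U)).card := by
    intro P
    simp only [Finset.card_filter]
    rw [Finset.sum_comm]
    rw [Finset.sum_filter]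
    apply Finset.sum_congr rfl
    intro v _
    by_cases hP : P v
    · simp [hP]
    · simp [hP]
  -- N : number of j-dim subspaces containing a fixed nonzero vector
  have hv0 : (Pi.single (⟨0, hm⟩ : Fin m) (1 : ZMod 2) : Fin m → ZMod 2) ≠ 0 := by
    intro h
    have := congrFun h ⟨0, hm⟩
    simp at this
  set v₀ : Fin m → ZMod 2 := Pi.single (⟨0, hm⟩ : Fin m) 1 with hv₀def
  set N := (Aj.filter (fun U => v₀ ∈ U)).card with hN
  have hsame : ∀ v : Fin m → ZMod 2, v ≠ 0 → (Aj.filter (fun U => v ∈ U)).card = N := by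
    intro v hv
    rw [hN, hAj]
    exact count_contain_eq j v v₀ hv hv0
  -- LHS as (2^i - 1) * N
  have hW_card : (univ.filter (fun v => v ∈ W ∧ v ≠ 0)).card = 2 ^ i - 1 := by
    rw [card_nonzero_mem W, hW]
  have lhs_eq : ∑ k ∈ Finset.range (m+1), numInter m j k W * (2 ^ k - 1)
      = (2 ^ i - 1) * N := by
    rw [step1]
    have swapW := swap (fun v => v ∈ W ∧ v ≠ 0)
    beta_reduce at swapW
    rw [Finset.sum_congr rfl (fun U _ => step2 U)]
    have key : ∑ U ∈ Aj, (univ.filter (fun v => (v ∈ W ∧ v ≠ 0) ∧ v ∈ U)).card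
        = ∑ v ∈ univ.filter (fun v => v ∈ W ∧ v ≠ 0), (Aj.filter (fun U => v ∈ U)).card := by
      convert swapW using 4
    rw [key]
    rw [Finset.sum_congr rfl (fun v hv => hsame v (by
      simp only [Finset.mem_filter] at hv; exact hv.2.2))]
    rw [Finset.sum_const, smul_eq_mul, hW_card]
  -- double counting with W = ⊤
  have htop_card : (univ.filter (fun v => v ∈ (⊤ : Submodule (ZMod 2) (Fin m → ZMod 2)) ∧ v ≠ 0)).card
      = 2 ^ m - 1 := by
    rw [card_nonzero_mem, finrank_top, hfrk_total]
  have hD : (2 ^ m - 1) * N = Aj.card * (2 ^ j - 1) := by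
    have h1 : ∑ U ∈ Aj, (univ.filter (fun v =>
          (v ∈ (⊤ : Submodule (ZMod 2) (Fin m → ZMod 2)) ∧ v ≠ 0) ∧ v ∈ U)).card
        = ∑ v ∈ univ.filter (fun v =>
            v ∈ (⊤ : Submodule (ZMod 2) (Fin m → ZMod 2)) ∧ v ≠ 0),
            (Aj.filter (fun U => v ∈ U)).card := by
      have swapT := swap (fun v => v ∈ (⊤ : Submodule (ZMod 2) (Fin m → ZMod 2)) ∧ v ≠ 0)
      beta_reduce at swapT
      convert swapT using 4
    have h2 : ∀ U ∈ Aj, (univ.filter (fun v =>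
          (v ∈ (⊤ : Submodule (ZMod 2) (Fin m → ZMod 2)) ∧ v ≠ 0) ∧ v ∈ U)).card
        = 2 ^ j - 1 := by
      intro U hU
      have hUj : Module.finrank (ZMod 2) U = j := by
        rw [hAj] at hU; simpa using hU
      rw [← hUj, ← card_nonzero_mem U]
      congr 1
      apply Finset.filter_congr
      intro v _
      simp only [Submodule.mem_top, true_and]
      tauto
    rw [Finset.sum_congr rfl h2] at h1
    rw [Finset.sum_const, smul_eq_mul] at h1
    rw [Finset.sum_congr rfl (fun v hv => hsame v (by
      simp only [Finset.mem_filter] at hv; exact hv.2.2)) ] at h1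
    rw [Finset.sum_const, smul_eq_mul, htop_card] at h1
    omega
  rw [lhs_eq, hnumDim]
  calc (2 ^ m - 1) * ((2 ^ i - 1) * N) = (2 ^ i - 1) * ((2 ^ m - 1) * N) := by ring
    _ = (2 ^ i - 1) * (Aj.card * (2 ^ j - 1)) := by rw [hD]
    _ = Aj.card * ((2 ^ i - 1) * (2 ^ j - 1)) := by ring

lemma numDim_pos (j : ℕ) (hj : j ≤ m) : 0 < numDim m j := by
  rw [numDim, Set.ncard_pos (Set.toFinite _)]
  exact ⟨stdW m j, finrank_stdW j hj⟩

/-- The key moment identity for `Vprob`. -/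
lemma Vmoment (hm : 1 ≤ m) (i j : Fin (m+1)) :
    ∑ k : Fin (m+1), Vprob m i j k * ((2:ℝ) ^ (k:ℕ) - 1)
      = ((2:ℝ) ^ (i:ℕ) - 1) * ((2:ℝ) ^ (j:ℕ) - 1) / ((2:ℝ) ^ m - 1) := by
  have hile : (i : ℕ) ≤ m := Nat.lt_succ_iff.mp i.isLt
  have hjle : (j : ℕ) ≤ m := Nat.lt_succ_iff.mp j.isLt
  have hW : Module.finrank (ZMod 2) (stdW m (i:ℕ)) = (i:ℕ) := finrank_stdW _ hile
  have h := key_count (i : ℕ) (j : ℕ) hm hjle (stdW m (i:ℕ)) hW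
  have hcast : ((2:ℝ) ^ m - 1) * ∑ k ∈ Finset.range (m+1),
      (numInter m (j:ℕ) k (stdW m (i:ℕ)) : ℝ) * ((2:ℝ) ^ k - 1)
      = (numDim m (j:ℕ) : ℝ) * (((2:ℝ) ^ (i:ℕ) - 1) * ((2:ℝ) ^ (j:ℕ) - 1)) := by
    have := congrArg (fun n : ℕ => (n : ℝ)) h
    push_cast [Nat.one_le_two_pow] at this
    convert this using 2
  have hD : (numDim m (j:ℕ) : ℝ) ≠ 0 := by
    have := numDim_pos (m := m) (j : ℕ) hjle
    positivity
  have hM : ((2:ℝ) ^ m - 1) ≠ 0 := by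
    have : (1:ℝ) < 2 ^ m := by
      calc (1:ℝ) < 2 ^ 1 := by norm_num
      _ ≤ 2 ^ m := by apply pow_le_pow_right₀ <;> [norm_num; exact hm]
    linarith
  have hsum : ∑ k : Fin (m+1), Vprob m i j k * ((2:ℝ) ^ (k:ℕ) - 1)
      = (∑ k ∈ Finset.range (m+1),
          (numInter m (j:ℕ) k (stdW m (i:ℕ)) : ℝ) * ((2:ℝ) ^ k - 1)) / (numDim m (j:ℕ) : ℝ) := by
    rw [Fin.sum_univ_eq_sum_range (fun k => Vprob m i j k * ((2:ℝ) ^ k - 1))]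
    rw [Finset.sum_div]
    apply Finset.sum_congr rfl
    intro k _
    rw [Vprob, div_mul_eq_mul_div]
  rw [hsum]
  rw [div_eq_div_iff hD hM]
  linarith [hcast]

/-- The linear functional `Φ a = ∑ₖ aₖ (2^k − 1)`. -/
def Phi (m : ℕ) (a : Fin (m+1) → ℝ) : ℝ := ∑ k : Fin (m+1), a k * ((2:ℝ) ^ (k:ℕ) - 1)

lemma Phi_boxdot (hm : 1 ≤ m) (a b : Fin (m+1) → ℝ) :
    Phi m (boxdot m a b) = Phi m a * Phi m b / ((2:ℝ) ^ m - 1) := by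
  have step : Phi m (boxdot m a b)
      = ∑ i : Fin (m+1), ∑ j : Fin (m+1), (a i * b j) *
          (∑ k : Fin (m+1), Vprob m i j k * ((2:ℝ) ^ (k:ℕ) - 1)) := by
    rw [Phi]
    simp only [boxdot, Finset.sum_mul]
    rw [Finset.sum_comm]
    apply Finset.sum_congr rfl
    intro i _
    rw [Finset.sum_comm]
    apply Finset.sum_congr rfl
    intro j _
    rw [Finset.mul_sum]
    apply Finset.sum_congr rfl
    intro k _
    ring
  rw [step]
  have : ∀ i j : Fin (m+1), (a i * b j) *
      (∑ k : Fin (m+1), Vprob m i j k * ((2:ℝ) ^ (k:ℕ) - 1))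
      = (a i * ((2:ℝ) ^ (i:ℕ) - 1)) * (b j * ((2:ℝ) ^ (j:ℕ) - 1)) / ((2:ℝ) ^ m - 1) := by
    intro i j
    rw [Vmoment hm i j]
    ring
  rw [Finset.sum_congr rfl (fun i _ => Finset.sum_congr rfl (fun j _ => this i j))]
  rw [Phi, Phi]
  rw [Finset.sum_mul_sum]
  rw [Finset.sum_div]
  apply Finset.sum_congr rfl
  intro i _
  rw [Finset.sum_div]

lemma Phi_pcirc (ε : ℝ) : Phi m (pcirc m ε) = (1 + ε) ^ m - 1 := by
  rw [Phi]
  have h1 : ∀ k : Fin (m+1), pcirc m ε k * ((2:ℝ) ^ (k:ℕ) - 1)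
      = (2*ε) ^ (k:ℕ) * (1-ε) ^ (m - (k:ℕ)) * (m.choose (k:ℕ) : ℝ)
        - ε ^ (k:ℕ) * (1-ε) ^ (m - (k:ℕ)) * (m.choose (k:ℕ) : ℝ) := by
    intro k
    rw [pcirc]
    rw [mul_pow]
    ring
  rw [Finset.sum_congr rfl (fun k _ => h1 k), Finset.sum_sub_distrib]
  rw [Fin.sum_univ_eq_sum_range
    (fun k => (2*ε) ^ k * (1-ε) ^ (m - k) * (m.choose k : ℝ))]
  rw [Fin.sum_univ_eq_sum_range
    (fun k => ε ^ k * (1-ε) ^ (m - k) * (m.choose k : ℝ))]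
  rw [← add_pow, ← add_pow]
  have e1 : 2*ε + (1-ε) = 1+ε := by ring
  have e2 : ε + (1-ε) = 1 := by ring
  rw [e1, e2, one_pow]

lemma sum_pow_lt (k : Fin (m+1)) :
    ∑ i : Fin m, (if (i:ℕ)+1 ≤ (k:ℕ) then (2:ℝ)^(i:ℕ) else 0) = (2:ℝ)^(k:ℕ) - 1 := by
  rw [Fin.sum_univ_eq_sum_range (fun i => if i+1 ≤ (k:ℕ) then (2:ℝ)^i else 0)]
  have h1 : ∀ i ∈ Finset.range m, (if i+1 ≤ (k:ℕ) then (2:ℝ)^i else 0)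
      = if i ∈ Finset.range (k:ℕ) then (2:ℝ)^i else 0 := by
    intro i _
    congr 1
    simp only [Finset.mem_range, Nat.lt_iff_add_one_le]
  rw [Finset.sum_congr rfl h1, Finset.sum_ite_mem]
  have h2 : Finset.range m ∩ Finset.range (k:ℕ) = Finset.range (k:ℕ) := by
    have hk : (k:ℕ) ≤ m := Nat.lt_succ_iff.mp k.isLt
    ext t; simp only [Finset.mem_inter, Finset.mem_range]; omega
  rw [h2, geom_sum_eq (by norm_num : (2:ℝ) ≠ 1)]
  norm_num

lemma sum_fixed_point (dv : ℕ) (ε : ℝ) (x y : Fin m → ℝ) (hfp : x = fFun m dv ε y) :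
    ∑ i : Fin m, x i * (2:ℝ)^(i:ℕ) = Phi m (fcirc m dv ε (tilde m y)) := by
  subst hfp
  have h1 : ∀ i : Fin m, fFun m dv ε y i * (2:ℝ)^(i:ℕ)
      = ∑ k : Fin (m+1), (fcirc m dv ε (tilde m y) k) *
          (if (i:ℕ)+1 ≤ (k:ℕ) then (2:ℝ)^(i:ℕ) else 0) := by
    intro i
    rw [fFun, Finset.sum_mul]
    apply Finset.sum_congr rfl
    intro k _
    by_cases h : (i:ℕ)+1 ≤ (k:ℕ) <;> simp [h]
  rw [Finset.sum_congr rfl (fun i _ => h1 i), Finset.sum_comm]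
  rw [Phi]
  apply Finset.sum_congr rfl
  intro k _
  rw [← Finset.mul_sum, sum_pow_lt k]


end AuxProof

/-- **Lemma 2, part 4.** Nonzero density-evolution fixed points at distinct
positive channel parameters are distinct. -/
theorem fixed_points_distinct (m dv dc : ℕ) (hm : 1 ≤ m) (hdv : 2 ≤ dv) (hdc : 2 ≤ dc)
    (ε₁ ε₂ : ℝ) (h10 : 0 < ε₁) (h11 : ε₁ ≤ 1) (h20 : 0 < ε₂) (h21 : ε₂ ≤ 1) (hne : ε₁ ≠ ε₂)
    (x₁ x₂ : Fin m → ℝ)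
    (hx₁ : x₁ ∈ Xset m ε₁) (hx₁0 : x₁ ≠ 0) (hfp₁ : x₁ = fFun m dv ε₁ (gFun m dc x₁))
    (hx₂ : x₂ ∈ Xset m ε₂) (hx₂0 : x₂ ≠ 0) (hfp₂ : x₂ = fFun m dv ε₂ (gFun m dc x₂)) :
    x₁ ≠ x₂ := by
  intro heq
  subst heq
  have hMne : ((2:ℝ) ^ m - 1) ≠ 0 := by
    have : (1:ℝ) < 2 ^ m := by
      calc (1:ℝ) < 2 ^ 1 := by norm_num
      _ ≤ 2 ^ m := by apply pow_le_pow_right₀ <;> [norm_num; exact hm]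
    linarith
  have S1 := sum_fixed_point dv ε₁ x₁ (gFun m dc x₁) hfp₁
  have S2 := sum_fixed_point dv ε₂ x₁ (gFun m dc x₁) hfp₂
  simp only [fcirc] at S1 S2
  rw [Phi_boxdot hm, Phi_pcirc] at S1 S2
  set C := Phi m (boxdotPow m (dv-2) (tilde m (gFun m dc x₁))) with hC
  have hthis := S1.symm.trans S2
  rw [div_eq_div_iff hMne hMne] at hthis
  have hCC : ((1+ε₁)^m - 1) * C = ((1+ε₂)^m - 1) * C := mul_right_cancel₀ hMne hthis
  have hpow : (1+ε₁)^m ≠ (1+ε₂)^m := by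
    have hm0 : m ≠ 0 := by omega
    rcases lt_or_gt_of_ne hne with h | h
    · exact ne_of_lt (pow_lt_pow_left₀ (by linarith) (by linarith) hm0)
    · exact (ne_of_lt (pow_lt_pow_left₀ (by linarith) (by linarith) hm0)).symm
  have hC0 : C = 0 := by
    by_contra hCne
    apply hpow
    have := mul_right_cancel₀ hCne hCC
    linarith
  have hS0 : ∑ i : Fin m, x₁ i * (2:ℝ)^(i:ℕ) = 0 := by
    rw [S1, hC0, mul_zero, zero_div]
  have hx0 : x₁ = 0 := by
    funext i
    have hnn : ∀ i ∈ Finset.univ, (0:ℝ) ≤ x₁ i * (2:ℝ)^(i:ℕ) := by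
      intro i _
      exact mul_nonneg (hx₁ i).1 (by positivity)
    have hz := (Finset.sum_eq_zero_iff_of_nonneg hnn).mp hS0 i (Finset.mem_univ i)
    have h2 : ((2:ℝ)^(i:ℕ)) ≠ 0 := by positivity
    have := mul_eq_zero.mp hz
    simp only [Pi.zero_apply]
    tauto
  exact hx₁0 hx0

end
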